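/- Let p be an odd prime. Then Σ_{k=0}^{p-1} C(2k,k)² · 16^(p-1-k) ≡ (-1)^((p-1)/2) · 16^(p-1) (mod p²). Equivalently, in ZMod (p²), Σ_{k=0}^{p-1} C(2k,k)² · 16^(-k) = (-1)^((p-1)/2), which is the Rodriguez-Villegas supercongruence Σ_{k=0}^{p-1} C(2k,k)² / 16^k ≡ (-1)^((p-1)/2) (mod p²). -/

import Mathlib

open Finset Nat

/-- Product of the first `k` odd numbers. -/
def oddProd (k : ℕ) : ℕ := ∏ j ∈ range k, (2 * j + 1)

lemma two_mul_factorial (k : ℕ) : (2 * k)! = 2 ^ k * k ! * oddProd k := by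
  induction k with
  | zero => simp [oddProd]
  | succ k ih =>
    have h : 2 * (k + 1) = (2 * k + 1) + 1 := by ring
    rw [h, Nat.factorial_succ, Nat.factorial_succ, ih, Nat.factorial_succ]
    simp only [oddProd, prod_range_succ]
    ring

lemma choose_mul_factorial (k : ℕ) : (2 * k).choose k * k ! = 2 ^ k * oddProd k := by
  have h := Nat.choose_mul_factorial_mul_factorial (show k ≤ 2 * k by omega)
  have h2 : 2 * k - k = k := by omega
  rw [h2] at h
  have h3 := two_mul_factorial k
  have hk : 0 < k ! := k.factorial_pos
  have heq : (2 * k).choose k * k ! * k ! = 2 ^ k * oddProd k * k ! := by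
    rw [h, h3]; ring
  exact Nat.eq_of_mul_eq_mul_right hk heq

lemma prod_shift (m : ℕ) : ∀ k : ℕ, (∏ j ∈ range k, (m + 1 + j)) * m ! = (m + k)! := by
  intro k
  induction k with
  | zero => simp
  | succ k ih =>
    rw [prod_range_succ, show m + (k+1) = (m + k) + 1 by omega, Nat.factorial_succ]
    calc (∏ j ∈ range k, (m + 1 + j)) * (m + 1 + k) * m !
        = (m + 1 + k) * ((∏ j ∈ range k, (m + 1 + j)) * m !) := by ring
      _ = (m + k + 1) * (m + k)! := by rw [ih, show m+1+k = m+k+1 by omega]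

lemma prod_shift_choose (m k : ℕ) : (∏ j ∈ range k, (m + 1 + j)) = k ! * (m + k).choose k := by
  have h1 := prod_shift m k
  have h2 := Nat.choose_mul_factorial_mul_factorial (show k ≤ m + k by omega)
  rw [show m + k - k = m by omega] at h2
  have heq : (∏ j ∈ range k, (m + 1 + j)) * m ! = k ! * (m + k).choose k * m ! := by
    rw [h1, ← h2]; ring
  exact Nat.eq_of_mul_eq_mul_right m.factorial_pos heq

/-- Generalized alternating Vandermonde difference identity. -/
lemma vdm (m : ℕ) : ∀ n r : ℕ,
    (∑ k ∈ range (m + 1), (-1 : ℤ) ^ k * (m.choose k) * ((n + k).choose (r + m)))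
      = (-1) ^ m * (n.choose r) := by
  induction m with
  | zero => intro n r; simp
  | succ m ih =>
    intro n r
    rw [Finset.sum_range_succ']
    have hsplit : ∀ k ∈ range (m + 1),
        (-1 : ℤ) ^ (k+1) * (((m+1).choose (k+1) : ℕ)) * (((n + (k+1)).choose (r + (m+1)) : ℕ))
        = -((-1 : ℤ) ^ k * ((m.choose k : ℕ)) * ((((n+1) + k).choose ((r+1) + m) : ℕ)))
          + (-1 : ℤ) ^ (k+1) * ((m.choose (k+1) : ℕ)) * (((n + (k+1)).choose (r + (m+1)) : ℕ)) := by
      intro k _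
      rw [Nat.choose_succ_succ, show n + (k+1) = (n+1) + k by omega,
        show r + (m+1) = (r+1) + m by omega]
      push_cast
      ring
    rw [Finset.sum_congr rfl hsplit, Finset.sum_add_distrib, Finset.sum_neg_distrib,
      ih (n+1) (r+1)]
    have e1 : (∑ k ∈ range (m + 1),
        (-1 : ℤ) ^ (k+1) * ((m.choose (k+1) : ℕ)) * (((n + (k+1)).choose (r + (m+1)) : ℕ)))
        = ∑ k ∈ range m,
            (-1 : ℤ) ^ (k+1) * ((m.choose (k+1) : ℕ)) * (((n + (k+1)).choose ((r+1) + m) : ℕ)) := by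
      rw [Finset.sum_range_succ, Nat.choose_succ_self]
      norm_num
      apply Finset.sum_congr rfl
      intro k _
      rw [show r + (m+1) = (r+1) + m by omega]
    have e2 : (-1 : ℤ) ^ m * ((n.choose (r+1) : ℕ))
        = (∑ k ∈ range m,
            (-1 : ℤ) ^ (k+1) * ((m.choose (k+1) : ℕ)) * (((n + (k+1)).choose ((r+1) + m) : ℕ)))
          + (-1 : ℤ) ^ 0 * ((m.choose 0 : ℕ)) * (((n + 0).choose ((r+1) + m) : ℕ)) := by
      rw [← ih n (r+1), Finset.sum_range_succ']
    rw [e1]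
    have e3 : (-1 : ℤ) ^ 0 * (((m+1).choose 0 : ℕ)) * (((n + 0).choose (r + (m+1)) : ℕ))
        = (-1 : ℤ) ^ 0 * ((m.choose 0 : ℕ)) * (((n + 0).choose ((r+1) + m) : ℕ)) := by
      rw [show r + (m+1) = (r+1) + m by omega]
      simp
    rw [add_assoc, e3, ← e2]
    have hpas : ((n+1).choose (r+1) : ℤ) = (n.choose r : ℤ) + (n.choose (r+1) : ℤ) := by
      rw [Nat.choose_succ_succ]; push_cast; ring
    rw [hpas]
    ring

/-- Key identity: alternating sum of products of binomials. -/
lemma key (m : ℕ) :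
    (∑ k ∈ range (m + 1), (-1 : ℤ) ^ k * (m.choose k) * ((m + k).choose k)) = (-1) ^ m := by
  have h := vdm m m 0
  simp only [Nat.zero_add, Nat.choose_zero_right, Nat.cast_one, mul_one] at h
  rw [← h]
  apply Finset.sum_congr rfl
  intro k _
  have hs := Nat.choose_symm (show k ≤ m + k by omega)
  rw [show m + k - k = m by omega] at hs
  rw [hs]

theorem rv_supercongruence (p : ℕ) (hp : p.Prime) (hodd : Odd p) :
    (∑ k ∈ range p, ((Nat.choose (2 * k) k : ℤ)) ^ 2 * 16 ^ (p - 1 - k)) ≡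
      (-1) ^ ((p - 1) / 2) * 16 ^ (p - 1) [ZMOD (p : ℤ) ^ 2] := by
  obtain ⟨m, hm⟩ := hodd
  have hp2 : 2 ≤ p := hp.two_le
  have hm' : (p - 1) / 2 = m := by omega
  rw [hm']
  rw [show ((p : ℤ) ^ 2) = ((p ^ 2 : ℕ) : ℤ) by push_cast; ring]
  rw [← ZMod.intCast_eq_intCast_iff]
  push_cast
  haveI : NeZero (p ^ 2) := ⟨pow_ne_zero 2 (by omega)⟩
  have hp0 : ((p : ZMod (p ^ 2))) ^ 2 = 0 := by
    rw [← Nat.cast_pow]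
    exact ZMod.natCast_self (p ^ 2)
  have hfacunit : ∀ k : ℕ, k < p → IsUnit ((k ! : ℕ) : ZMod (p ^ 2)) := by
    intro k hk
    rw [ZMod.isUnit_iff_coprime]
    apply Nat.Coprime.pow_right
    exact ((Nat.Prime.coprime_iff_not_dvd hp).mpr
      (by rw [hp.dvd_factorial]; omega)).symm
  have hterm : ∀ k ∈ range p,
      (((2 * k).choose k : ℕ) : ZMod (p ^ 2)) ^ 2 * (16 : ZMod (p ^ 2)) ^ (p - 1 - k)
        = (if k ≤ m then ((((-1 : ℤ) ^ k * (m.choose k) * ((m + k).choose k)) : ℤ) : ZMod (p ^ 2))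
            * (16 : ZMod (p ^ 2)) ^ (p - 1) else 0) := by
    intro k hk
    rw [mem_range] at hk
    have hu : IsUnit (((k ! : ℕ) : ZMod (p ^ 2)) ^ 2) := (hfacunit k hk).pow 2
    apply hu.mul_right_cancel
    have hlhs : (((2 * k).choose k : ℕ) : ZMod (p ^ 2)) ^ 2 * (16 : ZMod (p ^ 2)) ^ (p - 1 - k)
          * ((k ! : ℕ) : ZMod (p ^ 2)) ^ 2
        = ((4 : ZMod (p ^ 2))) ^ k * (((oddProd k : ℕ) : ZMod (p ^ 2))) ^ 2
          * (16 : ZMod (p ^ 2)) ^ (p - 1 - k) := by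
      have hmul : (((2 * k).choose k : ℕ) : ZMod (p ^ 2)) * ((k ! : ℕ) : ZMod (p ^ 2))
          = ((2 : ZMod (p ^ 2))) ^ k * ((oddProd k : ℕ) : ZMod (p ^ 2)) := by
        rw [← Nat.cast_mul, choose_mul_factorial]
        push_cast
        ring
      calc (((2 * k).choose k : ℕ) : ZMod (p ^ 2)) ^ 2 * (16 : ZMod (p ^ 2)) ^ (p - 1 - k)
            * ((k ! : ℕ) : ZMod (p ^ 2)) ^ 2
          = ((((2 * k).choose k : ℕ) : ZMod (p ^ 2)) * ((k ! : ℕ) : ZMod (p ^ 2))) ^ 2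
            * (16 : ZMod (p ^ 2)) ^ (p - 1 - k) := by ring
        _ = (((2 : ZMod (p ^ 2))) ^ k * ((oddProd k : ℕ) : ZMod (p ^ 2))) ^ 2
            * (16 : ZMod (p ^ 2)) ^ (p - 1 - k) := by rw [hmul]
        _ = ((4 : ZMod (p ^ 2))) ^ k * (((oddProd k : ℕ) : ZMod (p ^ 2))) ^ 2
            * (16 : ZMod (p ^ 2)) ^ (p - 1 - k) := by
            rw [mul_pow, ← pow_mul, mul_comm k 2, pow_mul]
            norm_num
    rw [hlhs]
    by_cases hkm : k ≤ m
    · rw [if_pos hkm]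
      have hop : (((oddProd k : ℕ) : ZMod (p ^ 2))) ^ 2
          = (-4 : ZMod (p ^ 2)) ^ k * (((k ! * m.choose k : ℕ)) : ZMod (p ^ 2))
            * (((k ! * (m + k).choose k : ℕ)) : ZMod (p ^ 2)) := by
        have h1 : (((oddProd k : ℕ) : ZMod (p ^ 2))) ^ 2
            = ∏ j ∈ range k, ((2 * (j : ZMod (p ^ 2)) + 1)) ^ 2 := by
          rw [oddProd]
          push_cast
          rw [← prod_pow]
        have h2 : ∀ j ∈ range k, ((2 * (j : ZMod (p ^ 2)) + 1)) ^ 2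
            = (((2 * (j : ℤ) + 1) ^ 2 - (p : ℤ) ^ 2 : ℤ) : ZMod (p ^ 2)) := by
          intro j _
          push_cast
          rw [hp0]
          ring
        have h3 : ∏ j ∈ range k, ((2 * (j : ℤ) + 1) ^ 2 - (p : ℤ) ^ 2)
            = (-4 : ℤ) ^ k * (∏ j ∈ range k, ((m : ℤ) - j))
              * (∏ j ∈ range k, ((m : ℤ) + 1 + j)) := by
          have hconst : (∏ _j ∈ range k, (-4 : ℤ)) = (-4 : ℤ) ^ k := by
            rw [prod_const, card_range]
          rw [← hconst, ← prod_mul_distrib, ← prod_mul_distrib]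
          apply Finset.prod_congr rfl
          intro j _
          have hpz : (p : ℤ) = 2 * m + 1 := by exact_mod_cast congrArg (Nat.cast : ℕ → ℤ) hm
          rw [hpz]
          ring
        have h4 : (∏ j ∈ range k, ((m : ℤ) - j)) = ((k ! * m.choose k : ℕ) : ℤ) := by
          have hc : ∀ j ∈ range k, ((m : ℤ) - j) = (((m - j : ℕ)) : ℤ) := by
            intro j hj
            rw [mem_range] at hj
            have hjm : j ≤ m := by omega
            push_cast [hjm]
            ring
          rw [Finset.prod_congr rfl hc, ← Nat.cast_prod,
            ← Nat.descFactorial_eq_prod_range, Nat.descFactorial_eq_factorial_mul_choose]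
        have h5 : (∏ j ∈ range k, ((m : ℤ) + 1 + j)) = ((k ! * (m + k).choose k : ℕ) : ℤ) := by
          have hc : ∀ j ∈ range k, ((m : ℤ) + 1 + j) = (((m + 1 + j : ℕ)) : ℤ) := by
            intro j _; push_cast; ring
          rw [Finset.prod_congr rfl hc, ← Nat.cast_prod, prod_shift_choose]
        calc (((oddProd k : ℕ) : ZMod (p ^ 2))) ^ 2
            = ∏ j ∈ range k, ((2 * (j : ZMod (p ^ 2)) + 1)) ^ 2 := h1
          _ = ∏ j ∈ range k, (((2 * (j : ℤ) + 1) ^ 2 - (p : ℤ) ^ 2 : ℤ) : ZMod (p ^ 2)) :=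
              Finset.prod_congr rfl h2
          _ = (((∏ j ∈ range k, ((2 * (j : ℤ) + 1) ^ 2 - (p : ℤ) ^ 2)) : ℤ) : ZMod (p ^ 2)) := by
              rw [Int.cast_prod]
          _ = (-4 : ZMod (p ^ 2)) ^ k * (((k ! * m.choose k : ℕ)) : ZMod (p ^ 2))
              * (((k ! * (m + k).choose k : ℕ)) : ZMod (p ^ 2)) := by
              rw [h3, h4, h5]
              push_cast
              ring
      rw [hop]
      have h16 : (16 : ZMod (p ^ 2)) ^ k * (16 : ZMod (p ^ 2)) ^ (p - 1 - k)
          = (16 : ZMod (p ^ 2)) ^ (p - 1) := by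
        rw [← pow_add, show k + (p - 1 - k) = p - 1 by omega]
      have h4k : (4 : ZMod (p ^ 2)) ^ k * (-4 : ZMod (p ^ 2)) ^ k
          = (-1 : ZMod (p ^ 2)) ^ k * (16 : ZMod (p ^ 2)) ^ k := by
        rw [← mul_pow, ← mul_pow]
        norm_num
      calc (4 : ZMod (p ^ 2)) ^ k * ((-4 : ZMod (p ^ 2)) ^ k
              * (((k ! * m.choose k : ℕ)) : ZMod (p ^ 2))
              * (((k ! * (m + k).choose k : ℕ)) : ZMod (p ^ 2))) * (16 : ZMod (p ^ 2)) ^ (p - 1 - k)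
          = ((4 : ZMod (p ^ 2)) ^ k * (-4 : ZMod (p ^ 2)) ^ k)
              * ((16 : ZMod (p ^ 2)) ^ (p - 1 - k))
              * (((k ! * m.choose k : ℕ)) : ZMod (p ^ 2))
              * (((k ! * (m + k).choose k : ℕ)) : ZMod (p ^ 2)) := by ring
        _ = (-1 : ZMod (p ^ 2)) ^ k
              * ((16 : ZMod (p ^ 2)) ^ k * (16 : ZMod (p ^ 2)) ^ (p - 1 - k))
              * (((k ! * m.choose k : ℕ)) : ZMod (p ^ 2))
              * (((k ! * (m + k).choose k : ℕ)) : ZMod (p ^ 2)) := by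
            rw [h4k]; ring
        _ = ((((-1 : ℤ) ^ k * (m.choose k) * ((m + k).choose k)) : ℤ) : ZMod (p ^ 2))
              * (16 : ZMod (p ^ 2)) ^ (p - 1) * ((k ! : ℕ) : ZMod (p ^ 2)) ^ 2 := by
            rw [h16]
            push_cast
            ring
    · rw [if_neg hkm]
      have hdvd : p ∣ oddProd k := by
        have hmem : m ∈ range k := mem_range.mpr (by omega)
        have hd : (2 * m + 1) ∣ ∏ j ∈ range k, (2 * j + 1) :=
          Finset.dvd_prod_of_mem _ hmem
        rw [show 2 * m + 1 = p by omega] at hd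
        rw [oddProd]
        exact hd
      obtain ⟨t, ht⟩ := hdvd
      have hz : (((oddProd k : ℕ) : ZMod (p ^ 2))) ^ 2 = 0 := by
        rw [ht]
        push_cast
        rw [mul_pow, hp0]
        ring
      rw [hz]
      ring
  rw [Finset.sum_congr rfl hterm]
  rw [← Finset.sum_subset (Finset.range_subset_range.mpr (show m + 1 ≤ p by omega))
    (by intro x _ hx; rw [mem_range, not_lt] at hx; rw [if_neg (by omega)])]
  have hiff : ∀ k ∈ range (m + 1),
      (if k ≤ m then ((((-1 : ℤ) ^ k * (m.choose k) * ((m + k).choose k)) : ℤ) : ZMod (p ^ 2))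
        * (16 : ZMod (p ^ 2)) ^ (p - 1) else 0)
      = ((((-1 : ℤ) ^ k * (m.choose k) * ((m + k).choose k)) : ℤ) : ZMod (p ^ 2))
        * (16 : ZMod (p ^ 2)) ^ (p - 1) := by
    intro k hk
    rw [mem_range] at hk
    rw [if_pos (by omega)]
  rw [Finset.sum_congr rfl hiff, ← Finset.sum_mul, ← Int.cast_sum, key m]
  push_cast
  ring
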